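/- Let G be a finite cyclic group. A subset G0 ⊆ G is weakly half-factorial (i.e., every minimal zero-sum sequence over G0 has integral cross number) if and only if there exists a generating element e of G such that G0 ⊆ { d·e : d a positive divisor of |G| }. -/

import Mathlib

open Multiset

section Defs

variable {G : Type*} [AddCommGroup G]

/-- `S` is a zero-sum sequence over `G0`. -/
def IsZeroSumSeq (G0 : Set G) (S : Multiset G) : Prop :=
  (∀ g ∈ S, g ∈ G0) ∧ S.sum = 0

/-- `S` is a minimal zero-sum sequence over `G0`. -/
def IsMinZeroSum (G0 : Set G) (S : Multiset G) : Prop :=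
  S ≠ 0 ∧ IsZeroSumSeq G0 S ∧
    ∀ T : Multiset G, T ≤ S → T ≠ 0 → T ≠ S → T.sum ≠ 0

/-- The set of lengths of factorizations of `B` into minimal zero-sum sequences over `G0`. -/
def LengthSet (G0 : Set G) (B : Multiset G) : Set ℕ :=
  { k | ∃ F : Multiset (Multiset G), F.card = k ∧ (∀ A ∈ F, IsMinZeroSum G0 A) ∧ F.sum = B }

/-- The set of successive distances of a set of naturals. -/
def DeltaOf (L : Set ℕ) : Set ℕ :=
  { d | ∃ a ∈ L, ∃ b ∈ L, a < b ∧ b - a = d ∧ ∀ c ∈ L, ¬(a < c ∧ c < b) }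

/-- The set of distances of the monoid of zero-sum sequences over `G0`. -/
def DeltaB (G0 : Set G) : Set ℕ :=
  ⋃ B ∈ { B : Multiset G | IsZeroSumSeq G0 B }, DeltaOf (LengthSet G0 B)

/-- Minimal distance, with the convention `min ∅ = 0`. -/
noncomputable def minDelta (G0 : Set G) : ℕ := sInf (DeltaB G0)

/-- Cross number of a sequence. -/
noncomputable def crossNum (S : Multiset G) : ℚ :=
  (S.map fun g => (1 : ℚ) / (addOrderOf g : ℚ)).sum

/-- `G0` is weakly half-factorial. -/
def WeaklyHF (G0 : Set G) : Prop :=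
  ∀ A : Multiset G, IsMinZeroSum G0 A → ∃ m : ℕ, crossNum A = (m : ℚ)

/-- `G0` is half-factorial. -/
def HalfFactorial (G0 : Set G) : Prop :=
  ∀ B : Multiset G, IsZeroSumSeq G0 B →
    ∀ k ∈ LengthSet G0 B, ∀ l ∈ LengthSet G0 B, k = l

end Defs


/-! ### Auxiliary number-theoretic lemmas -/

section NT

lemma nat_gcd_lcm_distrib {a b c : ℕ} (ha : a ≠ 0) (hb : b ≠ 0) (hc : c ≠ 0) :
    Nat.gcd (Nat.lcm a b) c = Nat.lcm (Nat.gcd a c) (Nat.gcd b c) := by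
  have hab : Nat.lcm a b ≠ 0 := Nat.lcm_ne_zero ha hb
  have hac : Nat.gcd a c ≠ 0 := (Nat.gcd_pos_of_pos_left c (Nat.pos_of_ne_zero ha)).ne'
  have hbc : Nat.gcd b c ≠ 0 := (Nat.gcd_pos_of_pos_left c (Nat.pos_of_ne_zero hb)).ne'
  apply Nat.eq_of_factorization_eq
  · exact (Nat.gcd_pos_of_pos_left c (Nat.pos_of_ne_zero hab)).ne'
  · exact Nat.lcm_ne_zero hac hbc
  intro p
  rw [Nat.factorization_gcd hab hc, Nat.factorization_lcm ha hb,
    Nat.factorization_lcm hac hbc, Nat.factorization_gcd ha hc, Nat.factorization_gcd hb hc]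
  simp only [Finsupp.inf_apply, Finsupp.sup_apply]
  exact min_max_distrib_right _ _ _

lemma modEq_lcm {a b m k : ℕ} (h1 : a ≡ b [MOD m]) (h2 : a ≡ b [MOD k]) :
    a ≡ b [MOD Nat.lcm m k] := by
  rw [Nat.modEq_iff_dvd] at h1 h2 ⊢
  simpa [Int.lcm, ← Int.coe_lcm] using _root_.lcm_dvd h1 h2

lemma foldr_lcm_pos : ∀ (l : List ℕ), (∀ m ∈ l, 0 < m) → 0 < l.foldr Nat.lcm 1
  | [], _ => one_pos
  | m :: l, h => by
    simp only [List.foldr]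
    exact Nat.pos_of_ne_zero (Nat.lcm_ne_zero (h m (by simp)).ne'
      (foldr_lcm_pos l (fun x hx => h x (by simp [hx]))).ne')

lemma dvd_foldr_lcm : ∀ (l : List ℕ), ∀ m ∈ l, m ∣ l.foldr Nat.lcm 1 := by
  intro l
  induction l with
  | nil => simp
  | cons a l ih =>
    intro m hm
    rcases List.mem_cons.mp hm with rfl | hm
    · exact Nat.dvd_lcm_left _ _
    · exact (ih m hm).trans (Nat.dvd_lcm_right _ _)

lemma foldr_lcm_dvd : ∀ (l : List ℕ) (n : ℕ), (∀ m ∈ l, m ∣ n) → l.foldr Nat.lcm 1 ∣ n := by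
  intro l
  induction l with
  | nil => simp
  | cons a l ih =>
    intro n h
    exact Nat.lcm_dvd (h a (by simp)) (ih n fun m hm => h m (by simp [hm]))

lemma modEq_foldr_lcm {a b : ℕ} : ∀ (l : List ℕ), (∀ m ∈ l, a ≡ b [MOD m]) →
    a ≡ b [MOD l.foldr Nat.lcm 1] := by
  intro l
  induction l with
  | nil => simp [Nat.modEq_one]
  | cons c l ih =>
    intro h
    exact modEq_lcm (h c (by simp)) (ih fun m hm => h m (by simp [hm]))

lemma coprime_foldr_lcm {w : ℕ} : ∀ (l : List ℕ), (∀ m ∈ l, Nat.Coprime w m) →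
    Nat.Coprime w (l.foldr Nat.lcm 1) := by
  intro l
  induction l with
  | nil => simpa using Nat.coprime_one_right w
  | cons a l ih =>
    intro h
    have h1 : Nat.Coprime w (a * l.foldr Nat.lcm 1) :=
      Nat.Coprime.mul_right (h a (by simp)) (ih fun m hm => h m (by simp [hm]))
    exact Nat.Coprime.coprime_dvd_right (Nat.lcm_dvd_mul _ _) h1

lemma gcd_foldr_lcm {c : ℕ} (hc : 0 < c) : ∀ (l : List ℕ), (∀ m ∈ l, 0 < m) →
    Nat.gcd (l.foldr Nat.lcm 1) c = (l.map (fun m => Nat.gcd m c)).foldr Nat.lcm 1 := by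
  intro l
  induction l with
  | nil => simp [Nat.gcd_one_left]
  | cons a l ih =>
    intro h
    have ha : a ≠ 0 := (h a (by simp)).ne'
    have hl : l.foldr Nat.lcm 1 ≠ 0 := (foldr_lcm_pos l fun m hm => h m (by simp [hm])).ne'
    simp only [List.foldr, List.map]
    rw [nat_gcd_lcm_distrib ha hl hc.ne', ih fun m hm => h m (by simp [hm])]

/-- Chinese remainder theorem for a pairwise-compatible finite family. -/
lemma crt_list : ∀ (l : List (ℕ × ℕ)),
    (∀ p ∈ l, 0 < p.1) →
    (∀ p ∈ l, ∀ q ∈ l, p.2 ≡ q.2 [MOD Nat.gcd p.1 q.1]) →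
    ∃ w : ℕ, ∀ p ∈ l, w ≡ p.2 [MOD p.1] := by
  intro l
  induction l with
  | nil => exact fun _ _ => ⟨0, by simp⟩
  | cons q l ih =>
    intro hpos hcompat
    obtain ⟨w, hw⟩ := ih (fun p hp => hpos p (by simp [hp]))
      (fun p hp p' hp' => hcompat p (by simp [hp]) p' (by simp [hp']))
    set L := (l.map Prod.fst).foldr Nat.lcm 1 with hL
    have hq1 : 0 < q.1 := hpos q (by simp)
    have hco : w ≡ q.2 [MOD Nat.gcd L q.1] := by
      rw [hL, gcd_foldr_lcm hq1 _ (by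
        intro m hm
        obtain ⟨p, hp, rfl⟩ := List.mem_map.mp hm
        exact hpos p (by simp [hp])), List.map_map]
      apply modEq_foldr_lcm
      intro m hm
      obtain ⟨p, hp, rfl⟩ := List.mem_map.mp hm
      have h1 : w ≡ p.2 [MOD Nat.gcd p.1 q.1] :=
        (hw p hp).of_dvd (Nat.gcd_dvd_left _ _)
      exact h1.trans (hcompat p (by simp [hp]) q (by simp))
    obtain ⟨k, hk1, hk2⟩ := Nat.chineseRemainder' hco
    refine ⟨k, ?_⟩
    intro p hp
    rcases List.mem_cons.mp hp with rfl | hp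
    · exact hk2
    · exact (hk1.of_dvd (dvd_foldr_lcm _ _ (List.mem_map.mpr ⟨p, hp, rfl⟩))).trans (hw p hp)

/-- A residue coprime to `L ∣ n` lifts to a residue coprime to `n`. -/
lemma lift_coprime {L n : ℕ} (hL : L ∣ n) (hn : 0 < n) {w0 : ℕ} (hco : Nat.Coprime w0 L) :
    ∃ w : ℕ, Nat.Coprime w n ∧ w ≡ w0 [MOD L] := by
  have hnz : NeZero n := ⟨hn.ne'⟩
  have hLpos : 0 < L := Nat.pos_of_dvd_of_pos hL hn
  have hLz : NeZero L := ⟨hLpos.ne'⟩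
  obtain ⟨u, hu⟩ := ZMod.unitsMap_surjective hL (ZMod.unitOfCoprime w0 hco)
  refine ⟨(u : ZMod n).val, ZMod.val_coe_unit_coprime u, ?_⟩
  have h1 : (((u : ZMod n).val : ℕ) : ZMod L) = (w0 : ZMod L) := by
    have := congrArg (Units.val) hu
    rw [ZMod.unitsMap_def] at this
    simp only [Units.coe_map, MonoidHom.coe_coe, ZMod.castHom_apply] at this
    rw [ZMod.natCast_val, this, ZMod.coe_unitOfCoprime]
  exact (ZMod.natCast_eq_natCast_iff _ _ _).mp h1

/-- Key arithmetic step for the pairwise compatibility. -/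
lemma nt_pair {r s u v : ℕ} (hr : 0 < r) (hu : Nat.Coprime u r)
    (hyp : ∀ x y : ℕ, Nat.gcd r s ∣ x * u + y * v → Nat.gcd r s ∣ x + y) :
    u ≡ v [MOD Nat.gcd r s] := by
  set d := Nat.gcd r s with hd
  have hdpos : 0 < d := Nat.gcd_pos_of_pos_left _ hr
  have hdz : NeZero d := ⟨hdpos.ne'⟩
  have hud : Nat.Coprime u d := Nat.Coprime.coprime_dvd_right (Nat.gcd_dvd_left r s) hu
  set uu : (ZMod d)ˣ := ZMod.unitOfCoprime u hud with huu
  set x : ℕ := (((uu⁻¹ : (ZMod d)ˣ) : ZMod d) * (v : ZMod d)).val with hx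
  have hxc : (x : ZMod d) = ((uu⁻¹ : (ZMod d)ˣ) : ZMod d) * (v : ZMod d) := by
    rw [hx, ZMod.natCast_val, ZMod.cast_id]
  have hdm1 : ((d - 1 : ℕ) : ZMod d) = -1 := by
    have h0 : ((d : ℕ) : ZMod d) = 0 := ZMod.natCast_self d
    rw [Nat.cast_sub hdpos, h0, Nat.cast_one, zero_sub]
  have huc : ((u : ℕ) : ZMod d) = (uu : ZMod d) := (ZMod.coe_unitOfCoprime u hud).symm
  have h1 : d ∣ x * u + (d - 1) * v := by
    have hz : ((x * u + (d - 1) * v : ℕ) : ZMod d) = 0 := by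
      push_cast
      rw [hxc, hdm1, huc]
      have hinv : ((uu⁻¹ : (ZMod d)ˣ) : ZMod d) * (uu : ZMod d) = 1 := by
        rw [← Units.val_mul, inv_mul_cancel, Units.val_one]
      ring_nf
      rw [mul_comm ((uu⁻¹ : (ZMod d)ˣ) : ZMod d) (v : ZMod d), mul_assoc, hinv]
      ring
    exact (ZMod.natCast_eq_zero_iff _ _).mp hz
  have h2 : d ∣ x + (d - 1) := hyp x (d - 1) h1
  have hx1 : (x : ZMod d) = 1 := by
    have h3 : ((x + (d - 1) : ℕ) : ZMod d) = 0 := (ZMod.natCast_eq_zero_iff _ _).mpr h2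
    push_cast at h3
    rw [hdm1] at h3
    linear_combination h3
  have hv : (v : ZMod d) = (u : ZMod d) := by
    have h5 := hxc.symm.trans hx1
    have h4 : (uu : ZMod d) * (((uu⁻¹ : (ZMod d)ˣ) : ZMod d) * (v : ZMod d)) =
        (uu : ZMod d) * 1 := by rw [h5]
    rw [← mul_assoc, ← Units.val_mul, mul_inv_cancel, Units.val_one, one_mul, mul_one] at h4
    rw [h4, huc]
  exact ((ZMod.natCast_eq_natCast_iff _ _ _).mp hv).symm

end NT

/-! ### Cross number and factorization lemmas -/

section Group
variable {G : Type*} [AddCommGroup G]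

lemma crossNum_add (A B : Multiset G) : crossNum (A + B) = crossNum A + crossNum B := by
  simp [crossNum]

lemma crossNum_zero : crossNum (0 : Multiset G) = 0 := by simp [crossNum]

lemma crossNum_cons (g : G) (A : Multiset G) :
    crossNum (g ::ₘ A) = 1 / (addOrderOf g : ℚ) + crossNum A := by
  simp [crossNum]

lemma crossNum_replicate (k : ℕ) (g : G) :
    crossNum (Multiset.replicate k g) = k * (1 / (addOrderOf g : ℚ)) := by
  simp [crossNum, Multiset.map_replicate, Multiset.sum_replicate, nsmul_eq_mul]

/-- Every nonzero zero-sum sequence contains a minimal zero-sum subsequence. -/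
lemma exists_min_sub {G0 : Set G} {B : Multiset G} (hB : IsZeroSumSeq G0 B) (hB0 : B ≠ 0) :
    ∃ A : Multiset G, A ≤ B ∧ A ≠ 0 ∧ IsMinZeroSum G0 A := by
  classical
  set S : Set ℕ := {c | ∃ T : Multiset G, T ≤ B ∧ T ≠ 0 ∧ T.sum = 0 ∧ Multiset.card T = c}
  have hne : S.Nonempty := ⟨Multiset.card B, B, le_refl _, hB0, hB.2, rfl⟩
  obtain ⟨T, hTB, hT0, hTs, hTc⟩ := Nat.sInf_mem hne
  refine ⟨T, hTB, hT0, hT0, ⟨fun g hg => hB.1 g (Multiset.mem_of_le hTB hg), hTs⟩, ?_⟩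
  intro T' hT' hT'0 hT'ne hT's
  have hlt : Multiset.card T' < Multiset.card T :=
    Multiset.card_lt_card (lt_of_le_of_ne hT' hT'ne)
  have hmem : Multiset.card T' ∈ S := ⟨T', hT'.trans hTB, hT'0, hT's, rfl⟩
  have := Nat.sInf_le hmem
  omega

/-- Weakly half-factorial implies integral cross number for all zero-sum sequences. -/
lemma whf_zero_sum {G0 : Set G} (whf : WeaklyHF G0) :
    ∀ B : Multiset G, IsZeroSumSeq G0 B → ∃ m : ℕ, crossNum B = (m : ℚ) := by
  classical
  suffices h : ∀ (n : ℕ) (B : Multiset G), Multiset.card B = n → IsZeroSumSeq G0 B →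
      ∃ m : ℕ, crossNum B = (m : ℚ) by
    intro B hB
    exact h _ B rfl hB
  intro n
  induction n using Nat.strong_induction_on with
  | _ n ih =>
    intro B hn hB
    by_cases hB0 : B = 0
    · exact ⟨0, by simp [hB0, crossNum_zero]⟩
    obtain ⟨A, hAB, hA0, hAmin⟩ := exists_min_sub hB hB0
    obtain ⟨m1, hm1⟩ := whf A hAmin
    have hBsplit : B - A + A = B := tsub_add_cancel_of_le hAB
    have hcard : Multiset.card (B - A) < n := by
      have hc := congrArg (Multiset.card) hBsplit
      rw [Multiset.card_add] at hc
      have hApos : 0 < Multiset.card A := Multiset.card_pos.mpr hA0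
      omega
    have hBA : IsZeroSumSeq G0 (B - A) := by
      constructor
      · intro g hg
        exact hB.1 g (Multiset.mem_of_le (Multiset.sub_le_self _ _) hg)
      · have hs := congrArg Multiset.sum hBsplit
        rw [Multiset.sum_add, hAmin.2.1.2, add_zero] at hs
        rw [hs, hB.2]
    obtain ⟨m2, hm2⟩ := ih _ hcard (B - A) rfl hBA
    refine ⟨m2 + m1, ?_⟩
    calc crossNum B = crossNum (B - A + A) := by rw [hBsplit]
    _ = crossNum (B - A) + crossNum A := crossNum_add _ _
    _ = (m2 : ℚ) + m1 := by rw [hm1, hm2]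
    _ = ((m2 + m1 : ℕ) : ℚ) := by push_cast; ring

end Group

section FinGroup
variable {G : Type*} [AddCommGroup G] [Fintype G]

variable {G : Type*} [AddCommGroup G] [Fintype G]

lemma ord_eq {f : G} (hf : addOrderOf f = Fintype.card G) (a : ℕ) :
    addOrderOf (a • f) = Fintype.card G / Nat.gcd (Fintype.card G) a := by
  rcases Nat.eq_zero_or_pos a with rfl | ha
  · simp [Nat.div_self Fintype.card_pos]
  · rw [addOrderOf_nsmul' f ha.ne', hf]

lemma easy_aux {e : G} (he : addOrderOf e = Fintype.card G) :
    ∀ (A : Multiset G),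
      (∀ g ∈ A, g ∈ { x : G | ∃ d : ℕ, 0 < d ∧ d ∣ Fintype.card G ∧ x = d • e }) →
      ∃ D : ℕ, crossNum A = (D : ℚ) / (Fintype.card G : ℚ) ∧ A.sum = D • e := by
  have hn : 0 < Fintype.card G := Fintype.card_pos
  intro A
  induction A using Multiset.induction with
  | empty => exact fun _ => ⟨0, by simp [crossNum_zero], by simp⟩
  | cons g A ih =>
    intro hA
    obtain ⟨D, hD1, hD2⟩ := ih (fun x hx => hA x (Multiset.mem_cons_of_mem hx))
    obtain ⟨d, hd0, hdn, hge⟩ := hA g (Multiset.mem_cons_self g A)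
    refine ⟨d + D, ?_, ?_⟩
    · have hord : addOrderOf g = Fintype.card G / d := by
        rw [hge, ord_eq he, Nat.gcd_eq_right hdn]
      have hcast : ((Fintype.card G / d : ℕ) : ℚ) = (Fintype.card G : ℚ) / d :=
        Nat.cast_div hdn (by exact_mod_cast hd0.ne')
      rw [crossNum_cons, hD1, hord, hcast, one_div_div]
      rw [← add_div]
      push_cast
      ring
    · rw [Multiset.sum_cons, hD2, hge, ← add_nsmul]

lemma pair_compat {G0 : Set G} (whf : WeaklyHF G0) {f : G}
    (hf : addOrderOf f = Fintype.card G)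
    {g h : G} (hg : g ∈ G0) (hh : h ∈ G0) {a b : ℕ} (hga : a • f = g) (hhb : b • f = h) :
    a / Nat.gcd (Fintype.card G) a ≡ b / Nat.gcd (Fintype.card G) b
      [MOD Nat.gcd (addOrderOf g) (addOrderOf h)] := by
  set n := Fintype.card G with hnn
  have hn : 0 < n := Fintype.card_pos
  set r := addOrderOf g with hrdef
  set s := addOrderOf h with hsdef
  have hr : 0 < r := addOrderOf_pos g
  have hs : 0 < s := addOrderOf_pos h
  set g1 := Nat.gcd n a with hg1
  set g2 := Nat.gcd n b with hg2
  have hg1pos : 0 < g1 := Nat.gcd_pos_of_pos_left a hn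
  have hg2pos : 0 < g2 := Nat.gcd_pos_of_pos_left b hn
  set u := a / g1 with hu
  set v := b / g2 with hv
  have hreq : r = n / g1 := by rw [hrdef, ← hga, ord_eq hf]
  have hseq : s = n / g2 := by rw [hsdef, ← hhb, ord_eq hf]
  have hnr : n = g1 * r := by rw [hreq, Nat.mul_div_cancel' (Nat.gcd_dvd_left n a)]
  have hns : n = g2 * s := by rw [hseq, Nat.mul_div_cancel' (Nat.gcd_dvd_left n b)]
  have hau : a = g1 * u := by rw [hu, Nat.mul_div_cancel' (Nat.gcd_dvd_right n a)]
  have hbv : b = g2 * v := by rw [hv, Nat.mul_div_cancel' (Nat.gcd_dvd_right n b)]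
  have hcu : Nat.Coprime u r := by
    rw [hu, hreq]
    exact Nat.Coprime.symm (Nat.coprime_div_gcd_div_gcd hg1pos)
  -- the WHF consequence
  have whf2 : ∀ x y : ℕ, n ∣ x * a + y * b → r * s ∣ x * s + y * r := by
    intro x y hdvd
    set B := Multiset.replicate x g + Multiset.replicate y h with hB
    have hBzs : IsZeroSumSeq G0 B := by
      constructor
      · intro z hz
        rcases Multiset.mem_add.mp hz with hz | hz
        · rw [Multiset.eq_of_mem_replicate hz]; exact hg
        · rw [Multiset.eq_of_mem_replicate hz]; exact hh
      · rw [hB, Multiset.sum_add, Multiset.sum_replicate, Multiset.sum_replicate,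
          ← hga, ← hhb, smul_smul, smul_smul, ← add_nsmul]
        exact addOrderOf_dvd_iff_nsmul_eq_zero.mp (by rw [hf]; exact hdvd)
    obtain ⟨m, hm⟩ := whf_zero_sum whf B hBzs
    rw [hB, crossNum_add, crossNum_replicate, crossNum_replicate, ← hrdef, ← hsdef] at hm
    have hrq : (r : ℚ) ≠ 0 := by exact_mod_cast hr.ne'
    have hsq : (s : ℚ) ≠ 0 := by exact_mod_cast hs.ne'
    have hcast : ((x * s + y * r : ℕ) : ℚ) = ((m * (r * s) : ℕ) : ℚ) := by
      push_cast
      field_simp at hm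
      linarith [hm]
    have hnat : x * s + y * r = m * (r * s) := by exact_mod_cast hcast
    exact Dvd.intro m (by rw [hnat]; ring)
  -- the divisibility hypothesis for nt_pair
  set d := Nat.gcd r s with hd
  have hdpos : 0 < d := Nat.gcd_pos_of_pos_left _ hr
  obtain ⟨r', hr'⟩ : d ∣ r := Nat.gcd_dvd_left r s
  obtain ⟨s', hs'⟩ : d ∣ s := Nat.gcd_dvd_right r s
  have hr'pos : 0 < r' := by
    rcases Nat.eq_zero_or_pos r' with rfl | hp
    · rw [Nat.mul_zero] at hr'; omega
    · exact hp
  have hs'pos : 0 < s' := by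
    rcases Nat.eq_zero_or_pos s' with rfl | hp
    · rw [Nat.mul_zero] at hs'; omega
    · exact hp
  apply nt_pair hr hcu
  intro x' y' hdxy
  obtain ⟨t, ht⟩ := hdxy
  have hg1r' : g1 * r' = g2 * s' := by
    have hdd : d * (g1 * r') = d * (g2 * s') := by
      calc d * (g1 * r') = g1 * (d * r') := by ring
      _ = g1 * r := by rw [hr']
      _ = n := hnr.symm
      _ = g2 * s := hns
      _ = g2 * (d * s') := by rw [hs']
      _ = d * (g2 * s') := by ring
    exact Nat.eq_of_mul_eq_mul_left hdpos hdd
  have hkey : (r' * x') * a + (s' * y') * b = n * t := by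
    calc (r' * x') * a + (s' * y') * b
        = (g1 * r') * (x' * u) + (g2 * s') * (y' * v) := by rw [hau, hbv]; ring
    _ = (g1 * r') * (x' * u) + (g1 * r') * (y' * v) := by rw [hg1r']
    _ = (g1 * r') * (x' * u + y' * v) := by ring
    _ = (g1 * r') * (d * t) := by rw [ht]
    _ = (g1 * (d * r')) * t := by ring
    _ = n * t := by rw [← hr', ← hnr]
  have hcon := whf2 (r' * x') (s' * y') ⟨t, hkey⟩
  have heq : (r' * x') * s + (s' * y') * r = (r' * s) * (x' + y') := by
    calc (r' * x') * s + (s' * y') * r = r' * s * x' + r' * (d * s') * y' := by rw [hr']; ring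
    _ = r' * s * x' + r' * s * y' := by rw [← hs']
    _ = (r' * s) * (x' + y') := by ring
  have hrs : r * s = (r' * s) * d := by rw [hr']; ring
  rw [heq, hrs] at hcon
  exact (Nat.mul_dvd_mul_iff_left (by positivity : 0 < r' * s)).mp hcon

end FinGroup

/-- A subset `G0` of a finite cyclic group `G` is weakly
half-factorial iff `G0 ⊆ {d•e : d ∣ |G|}` for some generating element `e`. -/
theorem stmt_6 {G : Type*} [AddCommGroup G] [Fintype G] (hcyc : IsAddCyclic G)
    (G0 : Set G) :
    WeaklyHF G0 ↔ ∃ e : G, addOrderOf e = Fintype.card G ∧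
      G0 ⊆ { x : G | ∃ d : ℕ, 0 < d ∧ d ∣ Fintype.card G ∧ x = d • e } := by
  classical
  have hn : 0 < Fintype.card G := Fintype.card_pos
  constructor
  · intro whf
    obtain ⟨f, hfgen⟩ := hcyc.exists_generator
    have hf : addOrderOf f = Fintype.card G := by
      rw [addOrderOf_eq_card_of_forall_mem_zmultiples hfgen, Nat.card_eq_fintype_card]
    set n := Fintype.card G with hnn
    have hrep : ∀ x : G, ∃ a : ℕ, a • f = x := by
      intro x
      obtain ⟨k, hk⟩ := AddSubgroup.mem_zmultiples_iff.mp (hfgen x)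
      have hne : (n : ℤ) ≠ 0 := by exact_mod_cast hn.ne'
      refine ⟨(k % (n : ℤ)).toNat, ?_⟩
      have htn : ((k % (n : ℤ)).toNat : ℤ) = k % (n : ℤ) :=
        Int.toNat_of_nonneg (Int.emod_nonneg k hne)
      have h0 : (n : ℤ) • f = 0 := by
        rw [natCast_zsmul]
        exact addOrderOf_dvd_iff_nsmul_eq_zero.mp (by rw [hf])
      calc ((k % (n : ℤ)).toNat) • f = ((k % (n : ℤ)).toNat : ℤ) • f :=
            (natCast_zsmul f _).symm
      _ = (k % (n : ℤ)) • f := by rw [htn]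
      _ = (k - (n : ℤ) * (k / (n : ℤ))) • f := by rw [Int.emod_def]
      _ = k • f - ((n : ℤ) * (k / (n : ℤ))) • f := by rw [sub_zsmul, sub_eq_add_neg]
      _ = k • f - (k / (n : ℤ)) • ((n : ℤ) • f) := by rw [mul_comm, mul_zsmul]
      _ = x := by rw [h0, smul_zero, sub_zero, hk]
    choose A hA using hrep
    set l : List G := (Set.toFinite G0).toFinset.toList with hl
    have hlmem : ∀ x : G, x ∈ l ↔ x ∈ G0 := by
      intro x
      rw [hl, Finset.mem_toList, Set.Finite.mem_toFinset]
    obtain ⟨w0, hw0⟩ := crt_list (l.map (fun x => (addOrderOf x, A x / Nat.gcd n (A x))))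
      (by
        intro p hp
        obtain ⟨x, hx, rfl⟩ := List.mem_map.mp hp
        exact addOrderOf_pos x)
      (by
        intro p hp q hq
        obtain ⟨x, hx, rfl⟩ := List.mem_map.mp hp
        obtain ⟨y, hy, rfl⟩ := List.mem_map.mp hq
        exact pair_compat whf hf ((hlmem x).mp hx) ((hlmem y).mp hy) (hA x) (hA y))
    have hw0x : ∀ x ∈ G0, w0 ≡ A x / Nat.gcd n (A x) [MOD addOrderOf x] := by
      intro x hx
      exact hw0 _ (List.mem_map.mpr ⟨x, (hlmem x).mpr hx, rfl⟩)
    have hcop : ∀ x ∈ G0, Nat.Coprime w0 (addOrderOf x) := by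
      intro x hx
      have hcu : Nat.Coprime (A x / Nat.gcd n (A x)) (addOrderOf x) := by
        have hox := ord_eq hf (A x)
        rw [hA x] at hox
        rw [hox]
        exact Nat.Coprime.symm (Nat.coprime_div_gcd_div_gcd (Nat.gcd_pos_of_pos_left _ hn))
      have hmod := hw0x x hx
      unfold Nat.Coprime at hcu ⊢
      rw [Nat.gcd_comm] at hcu ⊢
      rw [Nat.gcd_rec, hmod, ← Nat.gcd_rec]
      exact hcu
    have hLn : (l.map (fun x => addOrderOf x)).foldr Nat.lcm 1 ∣ n := by
      apply foldr_lcm_dvd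
      intro m hm
      obtain ⟨x, hx, rfl⟩ := List.mem_map.mp hm
      exact addOrderOf_dvd_card
    have hw0L : Nat.Coprime w0 ((l.map (fun x => addOrderOf x)).foldr Nat.lcm 1) := by
      apply coprime_foldr_lcm
      intro m hm
      obtain ⟨x, hx, rfl⟩ := List.mem_map.mp hm
      exact hcop x ((hlmem x).mp hx)
    obtain ⟨w, hwn, hwL⟩ := lift_coprime hLn hn hw0L
    refine ⟨w • f, ?_, ?_⟩
    · rw [ord_eq hf w, Nat.Coprime.gcd_eq_one (Nat.coprime_comm.mp hwn), Nat.div_one]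
    · intro x hx
      refine ⟨Nat.gcd n (A x), Nat.gcd_pos_of_pos_left _ hn, Nat.gcd_dvd_left n (A x), ?_⟩
      have h3 : w ≡ w0 [MOD addOrderOf x] :=
        hwL.of_dvd (dvd_foldr_lcm _ _ (List.mem_map.mpr ⟨x, (hlmem x).mpr hx, rfl⟩))
      have h1 : w ≡ A x / Nat.gcd n (A x) [MOD addOrderOf x] := h3.trans (hw0x x hx)
      have hordx : addOrderOf x = n / Nat.gcd n (A x) := by
        have h5 := ord_eq hf (A x)
        rw [hA x] at h5
        exact h5
      have h4 := Nat.ModEq.mul_left' (Nat.gcd n (A x)) h1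
      rw [hordx, Nat.mul_div_cancel' (Nat.gcd_dvd_left n (A x)),
        Nat.mul_div_cancel' (Nat.gcd_dvd_right n (A x))] at h4
      have h6 : (A x) • f = (Nat.gcd n (A x) * w) • f :=
        nsmul_eq_nsmul_iff_modEq.mpr (by rw [hf]; exact h4.symm)
      rw [smul_smul, ← h6, hA x]
  · rintro ⟨e, he, hsub⟩ Amin hmin
    obtain ⟨D, hD1, hD2⟩ := easy_aux he Amin (fun g hg => hsub (hmin.2.1.1 g hg))
    rw [hmin.2.1.2] at hD2
    have hdvd : Fintype.card G ∣ D := by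
      rw [← he]
      exact addOrderOf_dvd_iff_nsmul_eq_zero.mpr hD2.symm
    refine ⟨D / Fintype.card G, ?_⟩
    rw [hD1, Nat.cast_div hdvd (by exact_mod_cast hn.ne')]
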